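/- Let λ > 0 and ξ ≠ 0 be real constants, let a₀ > 0 and a₁ ∈ ℝ with (a₀, a₁) ≠ (|ξ|/√λ, 0), and let a : ℝ → (0,∞) be the global solution of the Emden equation a''(t) = −λ/a(t) + ξ²/a(t)³ with a(0) = a₀ and a'(0) = a₁. Then a is non-trivially periodic: there exists T > 0 such that a(t + T) = a(t) for all t ∈ ℝ, and a is not a constant function. -/

import Mathlib

open Set Filter Topology

private lemma emden_log_aux {u : ℝ} (hu : 0 < u) : 1 - 1/u ≤ Real.log u := by
  have h := Real.log_le_sub_one_of_pos (show (0:ℝ) < 1/u by positivity)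
  rw [one_div, Real.log_inv] at h
  rw [one_div]
  linarith

private lemma emden_log_aux' {u : ℝ} (hu : 0 < u) (hu1 : u ≠ 1) : 1 - 1/u < Real.log u := by
  have h := Real.log_lt_sub_one_of_pos (show (0:ℝ) < 1/u by positivity) (by
    rw [ne_eq, div_eq_one_iff_eq (ne_of_gt hu)]
    exact fun h => hu1 h.symm)
  rw [one_div, Real.log_inv] at h
  rw [one_div]
  linarith

private lemma emden_linear_lb {f : ℝ → ℝ} (hf : Differentiable ℝ f) {T c : ℝ}
    (hc : ∀ t, T ≤ t → c ≤ deriv f t) : ∀ u, T ≤ u → f T + c * (u - T) ≤ f u := by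
  intro u hu
  have hmono : MonotoneOn (fun t => f t - c * t) (Ici T) := by
    apply monotoneOn_of_deriv_nonneg (convex_Ici T)
    · exact (hf.sub ((differentiable_id.const_mul c))).continuous.continuousOn
    · exact (hf.sub (differentiable_id.const_mul c)).differentiableOn
    · intro x hx
      rw [interior_Ici] at hx
      have h1 : HasDerivAt (fun t => f t - c * t) (deriv f x - c) x := by
        simpa using ((hf x).hasDerivAt.fun_sub ((hasDerivAt_id x).const_mul c))
      rw [h1.deriv]
      linarith [hc x hx.le]
  have := hmono (self_mem_Ici) (show u ∈ Ici T from hu) hu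
  simp only at this
  linarith

private lemma emden_linear_ub {f : ℝ → ℝ} (hf : Differentiable ℝ f) {T c : ℝ}
    (hc : ∀ t, T ≤ t → deriv f t ≤ c) : ∀ u, T ≤ u → f u ≤ f T + c * (u - T) := by
  intro u hu
  have := emden_linear_lb (f := fun t => -f t) hf.neg (T := T) (c := -c) ?_ u hu
  · have this : -f T + -c * (u - T) ≤ -f u := this
    linarith [this]
  · intro t ht
    rw [deriv.fun_neg]
    linarith [hc t ht]

private lemma emden_calc (T d w : ℝ) {v : ℝ} (hv : v ≠ 0) :
    d + v/2 * (T + 2*w/v + 1 - T) = d + w + v/2 := by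
  field_simp
  ring

private lemma emden_W_min (lam ξ : ℝ) (hlam : 0 < lam) (hξ : ξ ≠ 0) {x : ℝ} (hx : 0 < x) :
    lam * Real.log (|ξ| / Real.sqrt lam) + ξ^2/2 * (((|ξ| / Real.sqrt lam))^2)⁻¹
      ≤ lam * Real.log x + ξ^2/2 * (x^2)⁻¹ ∧
    (x ≠ |ξ| / Real.sqrt lam →
      lam * Real.log (|ξ| / Real.sqrt lam) + ξ^2/2 * (((|ξ| / Real.sqrt lam))^2)⁻¹
        < lam * Real.log x + ξ^2/2 * (x^2)⁻¹) := by
  set s := |ξ| / Real.sqrt lam with hsdef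
  have hs : 0 < s := div_pos (abs_pos.mpr hξ) (Real.sqrt_pos.mpr hlam)
  have hs2 : s^2 * lam = ξ^2 := by
    rw [hsdef, div_pow, sq_abs, Real.sq_sqrt hlam.le]
    field_simp
  set u := (x/s)^2 with hudef
  have hu : 0 < u := by positivity
  have hu2 : u = x^2/s^2 := by rw [hudef, div_pow]
  have hlogu : Real.log u = 2*(Real.log x - Real.log s) := by
    rw [hudef, Real.log_pow, Real.log_div (ne_of_gt hx) (ne_of_gt hs)]
    push_cast; ring
  have h1u : 1/u = s^2/x^2 := by rw [hu2, one_div_div]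
  have hkey : lam * Real.log x + ξ^2/2 * (x^2)⁻¹ - (lam * Real.log s + ξ^2/2 * (s^2)⁻¹)
      = lam/2 * (Real.log u - (1 - 1/u)) := by
    rw [hlogu, h1u, ← hs2]
    field_simp
    ring
  constructor
  · have h := emden_log_aux hu
    nlinarith [hkey]
  · intro hne
    have hu1 : u ≠ 1 := by
      intro h
      rw [hu2, div_eq_one_iff_eq (by positivity)] at h
      have : |x| = |s| := by rw [← Real.sqrt_sq_eq_abs, ← Real.sqrt_sq_eq_abs, h]
      rw [abs_of_pos hx, abs_of_pos hs] at this
      exact hne this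
    have h := emden_log_aux' hu hu1
    nlinarith [hkey]

private lemma emden_lipschitz (lam ξ m : ℝ) (hm : 0 < m) :
    ∃ K : NNReal, LipschitzOnWith K
      (fun p : ℝ × ℝ => (p.2, -lam / p.1 + ξ^2 / p.1^3)) {p : ℝ × ℝ | m ≤ p.1} := by
  set K₁ : ℝ := |lam|/m^2 + 3*ξ^2/m^4 with hK1
  have hK10 : 0 ≤ K₁ := by positivity
  refine ⟨NNReal.mk (max 1 K₁) (le_trans zero_le_one (le_max_left _ _)), ?_⟩
  rw [lipschitzOnWith_iff_dist_le_mul]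
  intro p hp q hq
  simp only [Set.mem_setOf_eq] at hp hq
  set x := p.1
  set y := q.1
  have hx : 0 < x := lt_of_lt_of_le hm hp
  have hy : 0 < y := lt_of_lt_of_le hm hq
  have hg : |(-lam/x + ξ^2/x^3) - (-lam/y + ξ^2/y^3)| ≤ K₁ * |x - y| := by
    have hfactor : (-lam/x + ξ^2/x^3) - (-lam/y + ξ^2/y^3)
        = (x - y) * (lam/(x*y) - ξ^2*(x^2 + x*y + y^2)/(x^3*y^3)) := by
      field_simp
      ring
    rw [hfactor, abs_mul, mul_comm]
    apply mul_le_mul_of_nonneg_right _ (abs_nonneg _)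
    have hA : |lam/(x*y)| ≤ |lam|/m^2 := by
      rw [abs_div, abs_of_pos (mul_pos hx hy)]
      apply div_le_div_of_nonneg_left (abs_nonneg lam) (by positivity)
      nlinarith
    have hBnn : 0 ≤ ξ^2*(x^2 + x*y + y^2)/(x^3*y^3) := by positivity
    have h1 : m^4 ≤ x*y^3 := by
      calc m^4 = m * m^3 := by ring
        _ ≤ x*y^3 := mul_le_mul hp (pow_le_pow_left₀ hm.le hq 3) (by positivity) (by linarith)
    have h2 : m^4 ≤ x^2*y^2 := by
      calc m^4 = m^2 * m^2 := by ring
        _ ≤ x^2*y^2 := mul_le_mul (pow_le_pow_left₀ hm.le hp 2) (pow_le_pow_left₀ hm.le hq 2)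
            (by positivity) (by positivity)
    have h3 : m^4 ≤ x^3*y := by
      calc m^4 = m^3 * m := by ring
        _ ≤ x^3*y := mul_le_mul (pow_le_pow_left₀ hm.le hp 3) hq (by positivity) (by positivity)
    have hB : ξ^2*(x^2 + x*y + y^2)/(x^3*y^3) ≤ 3*ξ^2/m^4 := by
      rw [div_le_div_iff₀ (by positivity) (by positivity)]
      nlinarith [mul_le_mul_of_nonneg_left h1 (sq_nonneg (ξ*x)),
        mul_le_mul_of_nonneg_left h2 (mul_nonneg (sq_nonneg ξ) (mul_pos hx hy).le),
        mul_le_mul_of_nonneg_left h3 (mul_nonneg (sq_nonneg ξ) (sq_nonneg y))]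
    calc |lam/(x*y) - ξ^2*(x^2 + x*y + y^2)/(x^3*y^3)|
        ≤ |lam/(x*y)| + |ξ^2*(x^2 + x*y + y^2)/(x^3*y^3)| := abs_sub _ _
      _ ≤ |lam|/m^2 + 3*ξ^2/m^4 := by
          rw [abs_of_nonneg hBnn]
          exact add_le_add hA hB
  simp only [NNReal.coe_mk]
  rw [Prod.dist_eq, Prod.dist_eq]
  apply max_le
  · have h1 : dist p.2 q.2 ≤ max (dist x y) (dist p.2 q.2) := le_max_right _ _
    have h2 : max (dist x y) (dist p.2 q.2) ≤ max 1 K₁ * max (dist x y) (dist p.2 q.2) :=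
      le_mul_of_one_le_left (le_trans dist_nonneg (le_max_right _ _)) (le_max_left _ _)
    exact le_trans h1 h2
  · have h1 : dist (-lam/x + ξ^2/x^3) (-lam/y + ξ^2/y^3) ≤ K₁ * dist x y := by
      rw [Real.dist_eq, Real.dist_eq]
      exact hg
    calc dist (-lam/x + ξ^2/x^3) (-lam/y + ξ^2/y^3) ≤ K₁ * dist x y := h1
      _ ≤ max 1 K₁ * max (dist x y) (dist p.2 q.2) :=
          mul_le_mul (le_max_right _ _) (le_max_left _ _) dist_nonneg
            (le_trans zero_le_one (le_max_left _ _))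

set_option maxHeartbeats 1000000 in
/-- For `λ > 0`, `ξ ≠ 0`, and initial data `(a₀, a₁) ≠ (|ξ|/√λ, 0)` with
`a₀ > 0`, the global positive solution of the Emden equation `a'' = −λ/a + ξ²/a³` with
`a(0) = a₀`, `a'(0) = a₁` is non-trivially periodic: there is `T > 0` with
`a(t + T) = a(t)` for all `t`, and `a` is not constant. -/
theorem emden_solution_periodic
    (lam ξ a₀ a₁ : ℝ) (hlam : 0 < lam) (hξ : ξ ≠ 0) (ha₀ : 0 < a₀)
    (hnontriv : ¬(a₀ = |ξ| / Real.sqrt lam ∧ a₁ = 0))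
    (a : ℝ → ℝ)
    (hreg : ContDiff ℝ 2 a)
    (hpos : ∀ t, 0 < a t)
    (hode : ∀ t, deriv (deriv a) t = -lam / a t + ξ ^ 2 / (a t) ^ 3)
    (hinit : a 0 = a₀) (hinit' : deriv a 0 = a₁) :
    (∃ T : ℝ, 0 < T ∧ ∀ t, a (t + T) = a t) ∧ ¬(∃ c : ℝ, ∀ t, a t = c) := by
  have hdiff : Differentiable ℝ a := hreg.differentiable (by norm_num)
  have hdiff' : Differentiable ℝ (deriv a) := by
    have h2 : ContDiff ℝ ((1:WithTop ℕ∞)+1) a := by exact_mod_cast hreg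
    rw [contDiff_succ_iff_deriv] at h2
    exact h2.2.2.differentiable one_ne_zero
  have hda : ∀ t, HasDerivAt a (deriv a t) t := fun t => (hdiff t).hasDerivAt
  have hda' : ∀ t, HasDerivAt (deriv a) (deriv (deriv a) t) t := fun t => (hdiff' t).hasDerivAt
  have hconta : Continuous a := hdiff.continuous
  have hcontd : Continuous (deriv a) := hdiff'.continuous
  obtain ⟨W, hWdef⟩ : ∃ W : ℝ → ℝ, W = fun x => lam * Real.log x + ξ^2/2 * (x^2)⁻¹ := ⟨_, rfl⟩
  obtain ⟨xs, hxsdef⟩ : ∃ xs : ℝ, xs = |ξ| / Real.sqrt lam := ⟨_, rfl⟩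
  have hxs : 0 < xs := hxsdef ▸ div_pos (abs_pos.mpr hξ) (Real.sqrt_pos.mpr hlam)
  have hxs2 : xs^2 * lam = ξ^2 := by
    rw [hxsdef, div_pow, sq_abs, Real.sq_sqrt hlam.le]
    field_simp
  have hWmin : ∀ x : ℝ, 0 < x → W xs ≤ W x := by
    intro x hx
    simp only [hWdef, hxsdef]
    exact (emden_W_min lam ξ hlam hξ hx).1
  have hWmin' : ∀ x : ℝ, 0 < x → x ≠ xs → W xs < W x := by
    intro x hx hne
    simp only [hWdef, hxsdef]
    exact (emden_W_min lam ξ hlam hξ hx).2 (by rw [← hxsdef]; exact hne)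
  obtain ⟨E0, hE0def⟩ : ∃ E0 : ℝ, E0 = a₁^2/2 + W a₀ := ⟨_, rfl⟩
  have energy : ∀ t, (deriv a t)^2/2 + W (a t) = E0 := by
    have hEd : ∀ t, HasDerivAt (fun t => (deriv a t)^2/2 + W (a t)) 0 t := by
      intro t
      simp only [hWdef]
      have h1 : HasDerivAt (fun t => (deriv a t)^2/2)
          (deriv a t * deriv (deriv a) t) t := by
        have h := ((hda' t).fun_pow 2).div_const 2
        refine h.congr_deriv ?_
        ring
      have h2 : HasDerivAt (fun t => lam * Real.log (a t)) (lam * (deriv a t / a t)) t :=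
        ((hda t).log (ne_of_gt (hpos t))).const_mul lam
      have h3 : HasDerivAt (fun t => ξ^2/2 * (((a t))^2)⁻¹)
          (ξ^2/2 * (-(2 * a t ^ 1 * deriv a t) / ((a t)^2)^2)) t :=
        (((hda t).pow 2).inv (pow_ne_zero 2 (ne_of_gt (hpos t)))).const_mul (ξ^2/2)
      have h := h1.add (h2.add h3)
      have hz : deriv a t * deriv (deriv a) t +
          (lam * (deriv a t / a t) + ξ^2/2 * (-(2 * a t ^ 1 * deriv a t) / ((a t)^2)^2)) = 0 := by
        rw [hode t]
        have h4 : a t ≠ 0 := ne_of_gt (hpos t)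
        field_simp
        ring
      rw [hz] at h
      exact h
    intro t
    have hconst := is_const_of_deriv_eq_zero (f := fun t => (deriv a t)^2/2 + W (a t))
      (fun x => (hEd x).differentiableAt) (fun x => (hEd x).deriv) t 0
    rw [hconst, hinit, hinit', hE0def]
  have hEW : ∀ t, W (a t) ≤ E0 := by
    intro t
    linarith only [energy t, sq_nonneg (deriv a t)]
  have hE0gt : W xs < E0 := by
    rcases not_and_or.mp hnontriv with h | h
    · have h1 : W xs < W a₀ := hWmin' a₀ ha₀ (by rw [hxsdef]; exact h)
      have h2 : 0 ≤ a₁^2/2 := by positivity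
      rw [hE0def]; linarith
    · have h1 : W xs ≤ W a₀ := hWmin a₀ ha₀
      have h2 : 0 < a₁^2/2 := by positivity
      rw [hE0def]; linarith
  obtain ⟨M, hM⟩ : ∃ M, ∀ t, a t ≤ M := by
    refine ⟨Real.exp (E0/lam), fun t => ?_⟩
    have h1 := hEW t
    rw [hWdef] at h1
    simp only at h1
    have h2 : 0 ≤ ξ^2/2 * ((a t)^2)⁻¹ := by positivity
    have h4 : Real.log (a t) ≤ E0/lam := by
      rw [le_div_iff₀ hlam]
      linarith
    calc a t = Real.exp (Real.log (a t)) := (Real.exp_log (hpos t)).symm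
      _ ≤ Real.exp (E0/lam) := Real.exp_le_exp.mpr h4
  obtain ⟨m, hm0, hm⟩ : ∃ m, 0 < m ∧ ∀ t, m ≤ a t := by
    obtain ⟨B, hBdef⟩ : ∃ B : ℝ, B = max E0 0 + 1 := ⟨_, rfl⟩
    have hB0 : 0 < B := by
      rw [hBdef]; have := le_max_right E0 0; linarith
    have hBE : E0 < B := by
      rw [hBdef]; have := le_max_left E0 0; linarith
    have hsB : 0 < Real.sqrt B := Real.sqrt_pos.mpr hB0
    refine ⟨min (ξ^2/(4*lam)) (|ξ|/(2*Real.sqrt B)), lt_min (by positivity)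
      (div_pos (abs_pos.mpr hξ) (by positivity)), fun t => ?_⟩
    by_contra hlt
    push_neg at hlt
    have hx : 0 < a t := hpos t
    have hx1 : a t < ξ^2/(4*lam) := lt_of_lt_of_le hlt (min_le_left _ _)
    have hx2 : a t < |ξ|/(2*Real.sqrt B) := lt_of_lt_of_le hlt (min_le_right _ _)
    have hlog : 1 - 1/(a t) ≤ Real.log (a t) := emden_log_aux hx
    have f1 : lam * (1 - 1/(a t)) ≤ lam * Real.log (a t) :=
      mul_le_mul_of_nonneg_left hlog hlam.le
    have e1 : lam * (1 - 1/(a t)) = lam - lam/(a t) := by ring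
    have h5 : 4*lam*(a t) < ξ^2 := by
      rw [lt_div_iff₀ (by positivity)] at hx1
      linarith
    have e3 : lam/(a t) ≤ (ξ^2/4) * ((a t)^2)⁻¹ := by
      have e3' : lam/(a t) ≤ (ξ^2/4) / (a t)^2 := by
        rw [div_le_div_iff₀ hx (by positivity)]
        nlinarith only [mul_le_mul_of_nonneg_right h5.le hx.le, hx]
      rwa [div_eq_mul_inv (ξ^2/4)] at e3'
    have hsb : Real.sqrt B ^ 2 = B := Real.sq_sqrt hB0.le
    have h2' : a t * (2*Real.sqrt B) < |ξ| := by
      rw [lt_div_iff₀ (by positivity)] at hx2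
      linarith
    have h6 : (a t * (2*Real.sqrt B))^2 < |ξ|^2 := by
      have hpos2 : 0 < a t * (2*Real.sqrt B) := by positivity
      nlinarith only [h2', hpos2, abs_nonneg ξ]
    have h7 : (a t)^2*(4*B) < ξ^2 := by
      rw [sq_abs] at h6
      nlinarith only [h6, hsb]
    have e4 : B < (ξ^2/4) * ((a t)^2)⁻¹ := by
      have e4' : B < (ξ^2/4) / (a t)^2 := by
        rw [lt_div_iff₀ (by positivity)]
        linarith only [h7]
      rwa [div_eq_mul_inv (ξ^2/4)] at e4'
    have hWt := hEW t
    rw [hWdef] at hWt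
    simp only at hWt
    linarith only [f1, e1, e3, e4, hWt, hBE, hlam]
  obtain ⟨C, hCdef⟩ : ∃ C : ℝ, C = Real.sqrt (2*(E0 - W xs)) := ⟨_, rfl⟩
  have hC : ∀ t, |deriv a t| ≤ C := by
    intro t
    have h1 : (deriv a t)^2 ≤ 2*(E0 - W xs) := by
      have ha := energy t
      have hb := hWmin (a t) (hpos t)
      linarith only [ha, hb, energy t]
    calc |deriv a t| = Real.sqrt ((deriv a t)^2) := (Real.sqrt_sq_eq_abs _).symm
      _ ≤ C := by rw [hCdef]; exact Real.sqrt_le_sqrt h1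
  have hC' : ∀ t, -C ≤ deriv a t ∧ deriv a t ≤ C := fun t => abs_le.mp (hC t)
  have hlimfalse : ∀ L, 0 < L → W L = E0 → Filter.Tendsto a Filter.atTop (nhds L) → False := by
    intro L hL0 hWLeq hLa
    have hLne : L ≠ xs := by
      intro h
      rw [h] at hWLeq
      linarith
    obtain ⟨cc, hccdef⟩ : ∃ cc : ℝ, cc = -lam / L + ξ^2 / L^3 := ⟨_, rfl⟩
    have hcc0 : cc ≠ 0 := by
      intro h
      apply hLne
      have h' : -lam / L + ξ^2 / L^3 = 0 := by rw [← hccdef]; exact h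
      have h1 : lam * L^2 = ξ^2 := by
        field_simp at h'
        have hccc : (lam * L^2 - ξ^2) * L = 0 := by linear_combination (-L) * h'
        rcases mul_eq_zero.mp hccc with h2 | h2
        · linarith
        · exact absurd h2 hL0.ne'
      have h4 : L^2 = xs^2 := by
        have : lam * L^2 = lam * xs^2 := by rw [h1]; linarith [hxs2]
        exact mul_left_cancel₀ hlam.ne' this
      have habs : |L| = |xs| := by rw [← Real.sqrt_sq_eq_abs, ← Real.sqrt_sq_eq_abs, h4]
      rwa [abs_of_pos hL0, abs_of_pos hxs] at habs
    have hacc : Filter.Tendsto (fun t => deriv (deriv a) t) Filter.atTop (nhds cc) := by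
      rw [hccdef]
      have h1 : Filter.Tendsto (fun t => -lam / a t + ξ^2/(a t)^3) Filter.atTop
          (nhds (-lam / L + ξ^2 / L^3)) :=
        (tendsto_const_nhds.div hLa hL0.ne').add
          (tendsto_const_nhds.div (hLa.pow 3) (pow_ne_zero 3 hL0.ne'))
      exact h1.congr (fun t => (hode t).symm)
    rcases hcc0.lt_or_gt with hcneg | hcpos
    · obtain ⟨T, hT⟩ := Filter.eventually_atTop.mp
        (hacc.eventually (gt_mem_nhds (show cc < cc/2 by linarith)))
      have hub := emden_linear_ub hdiff' (T := T) (c := cc/2) (fun t ht => (hT t ht).le)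
      obtain ⟨u, hudef⟩ : ∃ u : ℝ, u = T + 2*(-(deriv a T + C))/cc + 1 := ⟨_, rfl⟩
      have hu : T ≤ u := by
        rw [hudef]
        have h1 : 0 ≤ deriv a T + C := by linarith [(hC' T).1]
        have h2 : 0 ≤ 2*(-(deriv a T + C))/cc :=
          div_nonneg_iff.mpr (Or.inr ⟨by linarith, hcneg.le⟩)
        linarith
      have h2 := hub u hu
      have hcalc := emden_calc T (deriv a T) (-(deriv a T + C)) hcc0
      rw [← hudef] at hcalc
      linarith [(hC' u).1, h2, hcalc]
    · obtain ⟨T, hT⟩ := Filter.eventually_atTop.mp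
        (hacc.eventually (lt_mem_nhds (show cc/2 < cc by linarith)))
      have hlb := emden_linear_lb hdiff' (T := T) (c := cc/2) (fun t ht => (hT t ht).le)
      obtain ⟨u, hudef⟩ : ∃ u : ℝ, u = T + 2*(C - deriv a T)/cc + 1 := ⟨_, rfl⟩
      have hu : T ≤ u := by
        rw [hudef]
        have h1 : 0 ≤ C - deriv a T := by linarith [(hC' T).2]
        have h2 : 0 ≤ 2*(C - deriv a T)/cc := div_nonneg (by linarith) (by linarith)
        linarith
      have h2 := hlb u hu
      have hcalc := emden_calc T (deriv a T) (C - deriv a T) hcc0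
      rw [← hudef] at hcalc
      linarith [(hC' u).2, h2, hcalc]
  have hzero : ∀ s : ℝ, ∃ t, s < t ∧ deriv a t = 0 := by
    intro s
    by_contra hno
    push_neg at hno
    have hIVT : ∀ u v : ℝ, s < u → s < v → deriv a u < 0 → 0 < deriv a v → False := by
      intro u v hu hv hdu hdv
      have h0m : (0:ℝ) ∈ Set.uIcc (deriv a u) (deriv a v) := by
        rw [Set.mem_uIcc]
        left
        exact ⟨hdu.le, hdv.le⟩
      obtain ⟨c, hc, hc0⟩ := intermediate_value_uIcc (hcontd.continuousOn) h0m
      have hcs : s < c := lt_of_lt_of_le (lt_min hu hv) hc.1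
      exact hno c hcs hc0
    have hsplit : (∀ t, s < t → 0 < deriv a t) ∨ (∀ t, s < t → deriv a t < 0) := by
      rcases (hno (s+1) (by linarith)).lt_or_gt with hn | hp
      · right
        intro t ht
        rcases (hno t ht).lt_or_gt with h | h
        · exact h
        · exact (hIVT (s+1) t (by linarith) ht hn h).elim
      · left
        intro t ht
        rcases (hno t ht).lt_or_gt with h | h
        · exact (hIVT t (s+1) ht (by linarith) h hp).elim
        · exact h
    rcases hsplit with hsgn | hsgn
    · -- derivative positive beyond s
      have hmono : MonotoneOn a (Set.Ici (s+1)) := by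
        apply monotoneOn_of_deriv_nonneg (convex_Ici (s+1)) hconta.continuousOn
          hdiff.differentiableOn
        intro x hx
        rw [interior_Ici] at hx
        exact (hsgn x (by simp only [Set.mem_Ioi] at hx; linarith)).le
      have hfmono : Monotone (fun t => a (max t (s+1))) := fun x y hxy =>
        hmono (le_max_right x (s+1)) (le_max_right y (s+1)) (max_le_max hxy le_rfl)
      have hbdd : BddAbove (Set.range (fun t => a (max t (s+1)))) := by
        refine ⟨M, ?_⟩
        rintro z ⟨t, rfl⟩
        exact hM _
      have hLt := tendsto_atTop_ciSup hfmono hbdd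
      obtain ⟨L, hLdef⟩ : ∃ L : ℝ, L = ⨆ t : ℝ, a (max t (s+1)) := ⟨_, rfl⟩
      have hLa : Filter.Tendsto a Filter.atTop (nhds L) := by
        rw [hLdef]
        apply hLt.congr'
        filter_upwards [Filter.eventually_ge_atTop (s+1)] with t ht
        rw [max_eq_left ht]
      have hL0 : 0 < L :=
        lt_of_lt_of_le hm0 (ge_of_tendsto hLa (Filter.Eventually.of_forall hm))
      have hWL : Filter.Tendsto (fun t => W (a t)) Filter.atTop (nhds (W L)) := by
        have hWc : ContinuousAt W L := by
          rw [hWdef]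
          have hco : ContinuousAt (fun x : ℝ => (x^2)⁻¹) L :=
            (continuousAt_id.pow 2).inv₀ (pow_ne_zero 2 hL0.ne')
          exact (continuousAt_const.mul (Real.continuousAt_log hL0.ne')).add
            (continuousAt_const.mul hco)
        exact hWc.tendsto.comp hLa
      have hWLE : W L ≤ E0 := le_of_tendsto hWL (Filter.Eventually.of_forall hEW)
      have hsq : ∀ t, s < t → deriv a t = Real.sqrt (2*(E0 - W (a t))) := by
        intro t ht
        have h1 : 2*(E0 - W (a t)) = (deriv a t)^2 := by linarith [energy t]
        rw [h1, Real.sqrt_sq (hsgn t ht).le]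
      have hav : Filter.Tendsto (deriv a) Filter.atTop (nhds (Real.sqrt (2*(E0 - W L)))) := by
        have h2 : Filter.Tendsto (fun t => Real.sqrt (2*(E0 - W (a t)))) Filter.atTop
            (nhds (Real.sqrt (2*(E0 - W L)))) :=
          (Real.continuous_sqrt.continuousAt.tendsto).comp
            ((tendsto_const_nhds.sub hWL).const_mul 2)
        apply h2.congr'
        filter_upwards [Filter.eventually_gt_atTop s] with t ht
        exact (hsq t ht).symm
      rcases eq_or_lt_of_le (Real.sqrt_nonneg (2*(E0 - W L))) with hv0 | hvpos
      · have hWLeq : W L = E0 := by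
          have h1 : 2*(E0 - W L) ≤ 0 := Real.sqrt_eq_zero'.mp hv0.symm
          linarith
        exact hlimfalse L hL0 hWLeq hLa
      · obtain ⟨T, hT⟩ := Filter.eventually_atTop.mp
          (hav.eventually (lt_mem_nhds (show Real.sqrt (2*(E0 - W L))/2
            < Real.sqrt (2*(E0 - W L)) by linarith)))
        have hlb := emden_linear_lb hdiff (T := T) (c := Real.sqrt (2*(E0 - W L))/2)
          (fun t ht => (hT t ht).le)
        obtain ⟨u, hudef⟩ :
            ∃ u : ℝ, u = T + 2*(M - a T)/(Real.sqrt (2*(E0 - W L))) + 1 := ⟨_, rfl⟩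
        have hu : T ≤ u := by
          rw [hudef]
          have h1 : 0 ≤ M - a T := by linarith [hM T]
          have h2 : 0 ≤ 2*(M - a T)/(Real.sqrt (2*(E0 - W L))) :=
            div_nonneg (by linarith) (by linarith)
          linarith
        have h2 := hlb u hu
        have hcalc := emden_calc T (a T) (M - a T) hvpos.ne'
        rw [← hudef] at hcalc
        linarith [hM u, h2, hcalc]
    · -- derivative negative beyond s
      have hmono : AntitoneOn a (Set.Ici (s+1)) := by
        apply antitoneOn_of_deriv_nonpos (convex_Ici (s+1)) hconta.continuousOn
          hdiff.differentiableOn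
        intro x hx
        rw [interior_Ici] at hx
        exact (hsgn x (by simp only [Set.mem_Ioi] at hx; linarith)).le
      have hfmono : Antitone (fun t => a (max t (s+1))) := fun x y hxy =>
        hmono (le_max_right x (s+1)) (le_max_right y (s+1)) (max_le_max hxy le_rfl)
      have hbdd : BddBelow (Set.range (fun t => a (max t (s+1)))) := by
        refine ⟨m, ?_⟩
        rintro z ⟨t, rfl⟩
        exact hm _
      have hLt := tendsto_atTop_ciInf hfmono hbdd
      obtain ⟨L, hLdef⟩ : ∃ L : ℝ, L = ⨅ t : ℝ, a (max t (s+1)) := ⟨_, rfl⟩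
      have hLa : Filter.Tendsto a Filter.atTop (nhds L) := by
        rw [hLdef]
        apply hLt.congr'
        filter_upwards [Filter.eventually_ge_atTop (s+1)] with t ht
        rw [max_eq_left ht]
      have hL0 : 0 < L :=
        lt_of_lt_of_le hm0 (ge_of_tendsto hLa (Filter.Eventually.of_forall hm))
      have hWL : Filter.Tendsto (fun t => W (a t)) Filter.atTop (nhds (W L)) := by
        have hWc : ContinuousAt W L := by
          rw [hWdef]
          have hco : ContinuousAt (fun x : ℝ => (x^2)⁻¹) L :=
            (continuousAt_id.pow 2).inv₀ (pow_ne_zero 2 hL0.ne')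
          exact (continuousAt_const.mul (Real.continuousAt_log hL0.ne')).add
            (continuousAt_const.mul hco)
        exact hWc.tendsto.comp hLa
      have hWLE : W L ≤ E0 := le_of_tendsto hWL (Filter.Eventually.of_forall hEW)
      have hsq : ∀ t, s < t → deriv a t = -Real.sqrt (2*(E0 - W (a t))) := by
        intro t ht
        have h1 : 2*(E0 - W (a t)) = (deriv a t)^2 := by linarith [energy t]
        have h2 : Real.sqrt (2*(E0 - W (a t))) = |deriv a t| := by
          rw [h1, Real.sqrt_sq_eq_abs]
        rw [h2, abs_of_neg (hsgn t ht)]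
        ring
      have hav : Filter.Tendsto (deriv a) Filter.atTop (nhds (-Real.sqrt (2*(E0 - W L)))) := by
        have h2 : Filter.Tendsto (fun t => -Real.sqrt (2*(E0 - W (a t)))) Filter.atTop
            (nhds (-Real.sqrt (2*(E0 - W L)))) :=
          ((Real.continuous_sqrt.continuousAt.tendsto).comp
            ((tendsto_const_nhds.sub hWL).const_mul 2)).neg
        apply h2.congr'
        filter_upwards [Filter.eventually_gt_atTop s] with t ht
        exact (hsq t ht).symm
      rcases eq_or_lt_of_le (Real.sqrt_nonneg (2*(E0 - W L))) with hv0 | hvpos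
      · have hWLeq : W L = E0 := by
          have h1 : 2*(E0 - W L) ≤ 0 := Real.sqrt_eq_zero'.mp hv0.symm
          linarith
        exact hlimfalse L hL0 hWLeq hLa
      · obtain ⟨T, hT⟩ := Filter.eventually_atTop.mp
          (hav.eventually (gt_mem_nhds (show -Real.sqrt (2*(E0 - W L))
            < (-Real.sqrt (2*(E0 - W L)))/2 by linarith)))
        have hub := emden_linear_ub hdiff (T := T) (c := (-Real.sqrt (2*(E0 - W L)))/2)
          (fun t ht => (hT t ht).le)
        obtain ⟨u, hudef⟩ :
            ∃ u : ℝ, u = T + 2*(m - a T)/(-Real.sqrt (2*(E0 - W L))) + 1 := ⟨_, rfl⟩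
        have hu : T ≤ u := by
          rw [hudef]
          have h1 : 0 ≤ a T - m := by linarith [hm T]
          have h2 : 0 ≤ 2*(m - a T)/(-Real.sqrt (2*(E0 - W L))) :=
            div_nonneg_iff.mpr (Or.inr ⟨by linarith, by linarith⟩)
          linarith
        have h2 := hub u hu
        have hcalc := emden_calc T (a T) (m - a T) (neg_ne_zero.mpr hvpos.ne')
        rw [← hudef] at hcalc
        linarith [hm u, h2, hcalc]
  have hrefl : ∀ t₀, deriv a t₀ = 0 → ∀ t, a (2*t₀ - t) = a t := by
    intro t₀ h0
    obtain ⟨K, hK⟩ := emden_lipschitz lam ξ m hm0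
    have main : ∀ tb, t₀ ≤ tb → a (2*t₀ - tb) = a tb := by
      intro tb htb
      have hFd : ∀ t : ℝ, HasDerivAt (fun t => (a t, deriv a t))
          ((fun p : ℝ × ℝ => (p.2, -lam / p.1 + ξ^2 / p.1^3)) ((fun t => (a t, deriv a t)) t)) t := by
        intro t
        have h1 : HasDerivAt (fun t => (a t, deriv a t)) (deriv a t, deriv (deriv a) t) t :=
          (hda t).prodMk (hda' t)
        simp only [hode t] at h1
        exact h1
      have hGd : ∀ t : ℝ, HasDerivAt (fun t => (a (2*t₀ - t), -deriv a (2*t₀ - t)))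
          ((fun p : ℝ × ℝ => (p.2, -lam / p.1 + ξ^2 / p.1^3))
            ((fun t => (a (2*t₀ - t), -deriv a (2*t₀ - t))) t)) t := by
        intro t
        have hi : HasDerivAt (fun t : ℝ => 2*t₀ - t) (-1) t := by
          simpa using (hasDerivAt_const t (2*t₀)).fun_sub (hasDerivAt_id t)
        have h1 : HasDerivAt (fun t => a (2*t₀ - t)) (deriv a (2*t₀ - t) * (-1)) t :=
          (hda (2*t₀ - t)).comp t hi
        have h2 : HasDerivAt (fun t => deriv a (2*t₀ - t)) (deriv (deriv a) (2*t₀ - t) * (-1)) t :=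
          (hda' (2*t₀ - t)).comp t hi
        have h3 := h1.prodMk h2.neg
        have he : (deriv a (2*t₀ - t) * (-1), -(deriv (deriv a) (2*t₀ - t) * (-1)))
            = ((fun p : ℝ × ℝ => (p.2, -lam / p.1 + ξ^2 / p.1^3))
              ((fun t => (a (2*t₀ - t), -deriv a (2*t₀ - t))) t)) := by
          simp only [hode (2*t₀ - t)]
          rw [Prod.mk.injEq]
          constructor <;> ring
        rw [he] at h3
        exact h3
      have hFc : ContinuousOn (fun t => (a t, deriv a t)) (Set.Icc t₀ tb) :=
        (hconta.prodMk hcontd).continuousOn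
      have hGc : ContinuousOn (fun t => (a (2*t₀ - t), -deriv a (2*t₀ - t))) (Set.Icc t₀ tb) := by
        have hi : Continuous (fun t : ℝ => 2*t₀ - t) := by continuity
        exact ((hconta.comp hi).prodMk (hcontd.comp hi).neg).continuousOn
      have huniq := ODE_solution_unique_of_mem_Icc_right
        (v := fun _ p => (p.2, -lam / p.1 + ξ^2 / p.1^3))
        (s := fun _ => {p : ℝ × ℝ | m ≤ p.1}) (K := K)
        (fun _ _ => hK) hFc (fun t _ => (hFd t).hasDerivWithinAt)
        (fun t _ => hm t) hGc (fun t _ => (hGd t).hasDerivWithinAt)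
        (fun t _ => hm (2*t₀ - t))
        (by simp only [show 2*t₀ - t₀ = t₀ by ring, h0]; simp)
      have := huniq (Set.right_mem_Icc.mpr htb)
      have heq := congrArg Prod.fst this
      simp only at heq
      exact heq.symm
    intro t
    rcases le_total t₀ t with h | h
    · exact main t h
    · have h2 := main (2*t₀ - t) (by linarith)
      rw [show 2*t₀ - (2*t₀ - t) = t by ring] at h2
      exact h2.symm
  obtain ⟨t₀, -, h0⟩ := hzero 0
  obtain ⟨t₁, h01, h1⟩ := hzero t₀
  refine ⟨⟨2*(t₁ - t₀), by linarith, fun t => ?_⟩, ?_⟩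
  · have e1 := hrefl t₀ h0 t
    have e2 := hrefl t₁ h1 (2*t₀ - t)
    rw [show 2*t₁ - (2*t₀ - t) = t + 2*(t₁ - t₀) by ring] at e2
    rw [e2, e1]
  · rintro ⟨c, hc⟩
    have hc0 : 0 < c := by rw [← hc 0]; exact hpos 0
    have hd0 : ∀ t, deriv a t = 0 := by
      intro t
      have : a = fun _ => c := funext hc
      rw [this]
      simp
    have hdd0 : deriv (deriv a) 0 = 0 := by
      have : deriv a = fun _ => 0 := funext hd0
      rw [this]
      simp
    rw [hode 0, hc 0] at hdd0
    have h3 : lam * c^2 = ξ^2 := by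
      field_simp at hdd0
      have hccc : (lam * c^2 - ξ^2) * c = 0 := by linear_combination (-c) * hdd0
      rcases mul_eq_zero.mp hccc with h | h
      · linarith
      · exact absurd h hc0.ne'
    have h4 : c^2 = xs^2 := by
      have : lam * c^2 = lam * xs^2 := by rw [h3]; linarith [hxs2]
      exact mul_left_cancel₀ hlam.ne' this
    have h5 : c = xs := by
      have habs : |c| = |xs| := by rw [← Real.sqrt_sq_eq_abs, ← Real.sqrt_sq_eq_abs, h4]
      rwa [abs_of_pos hc0, abs_of_pos hxs] at habs
    exact hnontriv ⟨by rw [← hinit, hc 0, h5, hxsdef], by rw [← hinit', hd0 0]⟩
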